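/- If a d-multiple Walsh series converges over cubes to zero at every point of 𝔾^d outside a closed set F, then the support of the quasimeasure τ generated by the series is contained in F; that is, for every dyadic cube Δ₀ disjoint from F and every dyadic cube Δ ⊆ Δ₀, one has τ(Δ) = 0. -/

import Mathlib

open Filter

/-- The dyadic group `𝔾`: 0-1 sequences with coordinatewise addition mod 2. -/
abbrev DyadicGroup : Type := ℕ → ZMod 2

/-- Walsh function `W_n(g) = ∏_k (-1)^{g_k n_k}` (Paley enumeration). -/
noncomputable def walsh (n : ℕ) (g : DyadicGroup) : ℝ :=
  ∏ k ∈ Finset.range n, if n.testBit k = true ∧ g k = 1 then (-1 : ℝ) else 1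

/-- `d`-dimensional Walsh function `W_n(g) = ∏_l W_{n^l}(g^l)`. -/
noncomputable def walshD {d : ℕ} (n : Fin d → ℕ) (g : Fin d → DyadicGroup) : ℝ :=
  ∏ l, walsh (n l) (g l)

/-- Cubic partial sum `S_N(g) = ∑_{n < N·1} c_n W_n(g)`. -/
noncomputable def cubicSum {d : ℕ} (c : (Fin d → ℕ) → ℂ) (N : ℕ)
    (g : Fin d → DyadicGroup) : ℂ :=
  ∑ n ∈ Fintype.piFinset (fun _ : Fin d => Finset.range N), c n * (walshD n g : ℂ)

/-- The dyadic cube of rank `k` with base `m : Fin d → Fin k → ZMod 2`. -/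
def dyadicCube (d k : ℕ) (m : Fin d → Fin k → ZMod 2) :
    Set (Fin d → DyadicGroup) :=
  {g | ∀ (l : Fin d) (j : Fin k), g l (j : ℕ) = m l j}

/-- A representative point of the cube of rank `k` with base `m`. -/
def basePoint {d k : ℕ} (m : Fin d → Fin k → ZMod 2) : Fin d → DyadicGroup :=
  fun l j => if h : j < k then m l ⟨j, h⟩ else 0

/-- The quasimeasure generated by a Walsh series:
`τ(Δ^{(k)}) = 2^{-kd} S_{2^k}(Δ^{(k)})`. -/
noncomputable def generatedQM {d : ℕ} (c : (Fin d → ℕ) → ℂ) (k : ℕ)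
    (m : Fin d → Fin k → ZMod 2) : ℂ :=
  ((2 : ℂ) ^ (k * d))⁻¹ * cubicSum c (2 ^ k) (basePoint m)

/-! Auxiliary lemmas -/

/-- Changing bit `k` of the argument. -/
def setbit {d : ℕ} (g : Fin d → DyadicGroup) (k : ℕ) (ε : Fin d → ZMod 2) :
    Fin d → DyadicGroup :=
  fun l j => if j = k then ε l else g l j

lemma walsh_congr {n k : ℕ} (hn : n < 2 ^ k) {g g' : DyadicGroup}
    (h : ∀ j < k, g j = g' j) : walsh n g = walsh n g' := by
  unfold walsh
  refine Finset.prod_congr rfl fun j _ => ?_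
  by_cases hjk : j < k
  · rw [h j hjk]
  · have hb : n.testBit j = false :=
      Nat.testBit_lt_two_pow (lt_of_lt_of_le hn (Nat.pow_le_pow_right (by norm_num)
        (le_of_not_gt hjk)))
    simp [hb]

lemma cubicSum_congr {d : ℕ} (c : (Fin d → ℕ) → ℂ) {k : ℕ}
    {g g' : Fin d → DyadicGroup} (h : ∀ l, ∀ j < k, g l j = g' l j) :
    cubicSum c (2 ^ k) g = cubicSum c (2 ^ k) g' := by
  unfold cubicSum
  refine Finset.sum_congr rfl fun n hn => ?_
  have hn' : ∀ l, n l < 2 ^ k := by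
    intro l
    have := (Fintype.mem_piFinset.mp hn) l
    simpa using this
  congr 2
  unfold walshD
  exact Finset.prod_congr rfl fun l _ => walsh_congr (hn' l) (h l)

lemma walsh_setbit_false {n k : ℕ} (h : n.testBit k = false) (g : DyadicGroup)
    (e : ZMod 2) : walsh n (fun j => if j = k then e else g j) = walsh n g := by
  unfold walsh
  refine Finset.prod_congr rfl fun j _ => ?_
  by_cases hj : j = k
  · subst hj; simp [h]
  · simp [hj]

lemma sum_walsh_setbit {n k : ℕ} (g : DyadicGroup) :
    ∑ e : ZMod 2, walsh n (fun j => if j = k then e else g j) =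
      if n.testBit k = true then 0 else 2 * walsh n g := by
  have huniv : (Finset.univ : Finset (ZMod 2)) = {0, 1} := by decide
  rw [huniv, Finset.sum_insert (by decide), Finset.sum_singleton]
  by_cases h : n.testBit k = true
  · have hk : k < n := lt_of_lt_of_le (Nat.lt_two_pow_self (n := k)) (Nat.ge_two_pow_of_testBit h)
    have hkmem : k ∈ Finset.range n := Finset.mem_range.mpr hk
    simp only [h, if_true]
    unfold walsh
    rw [← Finset.prod_erase_mul _ _ hkmem, ← Finset.prod_erase_mul _ _ hkmem]
    have hprod : ∀ e : ZMod 2,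
        ∏ j ∈ (Finset.range n).erase k,
          (if n.testBit j = true ∧ (fun j => if j = k then e else g j) j = 1 then (-1:ℝ) else 1) =
        ∏ j ∈ (Finset.range n).erase k,
          (if n.testBit j = true ∧ g j = 1 then (-1:ℝ) else 1) := by
      intro e
      refine Finset.prod_congr rfl fun j hj => ?_
      have : j ≠ k := Finset.ne_of_mem_erase hj
      simp [this]
    rw [hprod, hprod]
    simp [h]
  · rw [if_neg h]
    have hb : n.testBit k = false := by simpa using h
    rw [walsh_setbit_false hb g, walsh_setbit_false hb g]
    ring

lemma sum_cubicSum_setbit {d : ℕ} (c : (Fin d → ℕ) → ℂ) (k : ℕ)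
    (g : Fin d → DyadicGroup) :
    ∑ ε : Fin d → ZMod 2, cubicSum c (2 ^ (k + 1)) (setbit g k ε) =
      (2 : ℂ) ^ d * cubicSum c (2 ^ k) g := by
  unfold cubicSum
  rw [Finset.sum_comm]
  have step1 : ∀ n : Fin d → ℕ,
      ∑ ε : Fin d → ZMod 2, (c n * (walshD n (setbit g k ε) : ℂ)) =
        c n * (((∏ l, if (n l).testBit k = true then (0:ℝ) else 2 * walsh (n l) (g l)) : ℝ) : ℂ) := by
    intro n
    rw [← Finset.mul_sum]
    congr 1
    rw [← Complex.ofReal_sum]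
    congr 1
    have : ∑ ε : Fin d → ZMod 2, walshD n (setbit g k ε) =
        ∏ l, ∑ e : ZMod 2, walsh (n l) (fun j => if j = k then e else g l j) := by
      rw [Finset.prod_univ_sum]
      rw [← Fintype.piFinset_univ]
      rfl
    rw [this]
    exact Finset.prod_congr rfl fun l _ => sum_walsh_setbit (g l)
  calc ∑ n ∈ Fintype.piFinset (fun _ : Fin d => Finset.range (2 ^ (k+1))),
        ∑ ε : Fin d → ZMod 2, (c n * (walshD n (setbit g k ε) : ℂ))
      = ∑ n ∈ Fintype.piFinset (fun _ : Fin d => Finset.range (2 ^ (k+1))),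
        c n * (((∏ l, if (n l).testBit k = true then (0:ℝ) else 2 * walsh (n l) (g l)) : ℝ) : ℂ) := by
        exact Finset.sum_congr rfl fun n _ => step1 n
    _ = ∑ n ∈ Fintype.piFinset (fun _ : Fin d => Finset.range (2 ^ k)),
        c n * (((∏ l, if (n l).testBit k = true then (0:ℝ) else 2 * walsh (n l) (g l)) : ℝ) : ℂ) := by
        refine (Finset.sum_subset ?_ ?_).symm
        · intro n hn
          rw [Fintype.mem_piFinset] at hn ⊢
          intro l
          have := hn l
          rw [Finset.mem_range] at this ⊢
          exact lt_of_lt_of_le this (Nat.pow_le_pow_right (by norm_num) (Nat.le_succ k))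
        · intro n hn hn'
          rw [Fintype.mem_piFinset] at hn
          rw [Fintype.mem_piFinset] at hn'
          push_neg at hn'
          obtain ⟨l, hl⟩ := hn'
          have h1 : 2 ^ k ≤ n l := by
            by_contra h
            exact hl (Finset.mem_range.mpr (lt_of_not_ge h))
          have h2 : n l < 2 ^ (k + 1) := Finset.mem_range.mp (hn l)
          have h2' : n l < 2 ^ k * 2 := by rw [pow_succ] at h2; exact h2
          have hdiv : n l / 2 ^ k = 1 := by
            apply Nat.div_eq_of_lt_le
            · omega
            · have : Nat.succ 1 * 2 ^ k = 2 ^ k * 2 := by ring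
              omega
          have hbit : (n l).testBit k = true := by
            simp [Nat.testBit_eq_decide_div_mod_eq, hdiv]
          have : (∏ l', if (n l').testBit k = true then (0:ℝ) else 2 * walsh (n l') (g l')) = 0 :=
            Finset.prod_eq_zero (Finset.mem_univ l) (by simp [hbit])
          simp [this]
    _ = (2 : ℂ) ^ d * ∑ n ∈ Fintype.piFinset (fun _ : Fin d => Finset.range (2 ^ k)),
          c n * (walshD n g : ℂ) := by
        rw [Finset.mul_sum]
        refine Finset.sum_congr rfl fun n hn => ?_
        have hbit : ∀ l, (n l).testBit k = false := by
          intro l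
          have : n l < 2 ^ k := by
            have := (Fintype.mem_piFinset.mp hn) l
            simpa using this
          exact Nat.testBit_lt_two_pow this
        have : (∏ l, if (n l).testBit k = true then (0:ℝ) else 2 * walsh (n l) (g l)) =
            2 ^ d * walshD n g := by
          unfold walshD
          calc (∏ l, if (n l).testBit k = true then (0:ℝ) else 2 * walsh (n l) (g l))
              = ∏ l, 2 * walsh (n l) (g l) :=
                Finset.prod_congr rfl fun l _ => by simp [hbit l]
            _ = (∏ _l : Fin d, (2:ℝ)) * ∏ l, walsh (n l) (g l) := Finset.prod_mul_distrib
            _ = 2 ^ d * ∏ l, walsh (n l) (g l) := by simp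
        rw [this]
        push_cast
        ring

lemma exists_setbit_ge {d : ℕ} (c : (Fin d → ℕ) → ℂ) (k : ℕ)
    (g : Fin d → DyadicGroup) :
    ∃ ε : Fin d → ZMod 2,
      ‖cubicSum c (2 ^ k) g‖ ≤ ‖cubicSum c (2 ^ (k + 1)) (setbit g k ε)‖ := by
  by_contra hcon
  push_neg at hcon
  have h1 : ((2:ℝ) ^ d) * ‖cubicSum c (2 ^ k) g‖ =
      ‖∑ ε : Fin d → ZMod 2, cubicSum c (2 ^ (k + 1)) (setbit g k ε)‖ := by
    rw [sum_cubicSum_setbit, norm_mul]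
    congr 1
    simp
  have h2 : ‖∑ ε : Fin d → ZMod 2, cubicSum c (2 ^ (k + 1)) (setbit g k ε)‖ ≤
      ∑ ε : Fin d → ZMod 2, ‖cubicSum c (2 ^ (k + 1)) (setbit g k ε)‖ :=
    norm_sum_le _ _
  have h3 : ∑ ε : Fin d → ZMod 2, ‖cubicSum c (2 ^ (k + 1)) (setbit g k ε)‖ <
      ∑ _ε : Fin d → ZMod 2, ‖cubicSum c (2 ^ k) g‖ :=
    Finset.sum_lt_sum_of_nonempty Finset.univ_nonempty (fun ε _ => hcon ε)
  have h4 : ∑ _ε : Fin d → ZMod 2, ‖cubicSum c (2 ^ k) g‖ =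
      ((2:ℝ) ^ d) * ‖cubicSum c (2 ^ k) g‖ := by
    rw [Finset.sum_const, nsmul_eq_mul]
    congr 1
    simp [Fintype.card_fun]
  linarith

/-- If a `d`-multiple Walsh series converges over cubes to zero at every point
outside a closed set `F`, then the support of the generated quasimeasure is
contained in `F`: for every dyadic cube `Δ₀` disjoint from `F` and every
dyadic cube `Δ ⊆ Δ₀`, `τ(Δ) = 0`. -/
theorem support_subset_of_convergence (d : ℕ) (c : (Fin d → ℕ) → ℂ)
    (F : Set (Fin d → DyadicGroup)) (hF : IsClosed F)
    (hconv : ∀ g ∉ F, Tendsto (fun N => cubicSum c N g) atTop (nhds 0)) :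
    ∀ (k₀ : ℕ) (m₀ : Fin d → Fin k₀ → ZMod 2),
      Disjoint (dyadicCube d k₀ m₀) F →
      ∀ (k : ℕ) (m : Fin d → Fin k → ZMod 2),
        dyadicCube d k m ⊆ dyadicCube d k₀ m₀ →
        generatedQM c k m = 0 := by
  intro k₀ m₀ hdisj k m hsub
  -- the recursively chosen points
  set P : ℕ → (Fin d → DyadicGroup) := fun j =>
    Nat.rec (basePoint m)
      (fun j g => setbit g (k + j) (Classical.choose (exists_setbit_ge c (k + j) g))) j
    with hP
  have hPsucc : ∀ j, P (j + 1) =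
      setbit (P j) (k + j) (Classical.choose (exists_setbit_ge c (k + j) (P j))) :=
    fun j => rfl
  have hval : ∀ j, ‖cubicSum c (2 ^ k) (P 0)‖ ≤ ‖cubicSum c (2 ^ (k + j)) (P j)‖ := by
    intro j
    induction j with
    | zero => exact le_refl _
    | succ j ih =>
      refine le_trans ih ?_
      rw [hPsucc j]
      exact Classical.choose_spec (exists_setbit_ge c (k + j) (P j))
  -- stability of coordinates
  have hstab : ∀ a b, a ≤ b → ∀ l i, i < k + a → P b l i = P a l i := by
    intro a b hab
    induction b, hab using Nat.le_induction with
    | base => intro l i _; rfl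
    | succ b hab ih =>
      intro l i hi
      have hne : i ≠ k + b := by omega
      rw [hPsucc b]
      show (if i = k + b then _ else P b l i) = P a l i
      rw [if_neg hne]
      exact ih l i hi
  -- the limit point
  set G : Fin d → DyadicGroup := fun l i => P (i + 1) l i with hGdef
  have hG : ∀ j l i, i < k + j → G l i = P j l i := by
    intro j l i hi
    rcases le_total j (i + 1) with h | h
    · exact (hstab j (i + 1) h l i hi).symm ▸ rfl
    · exact (hstab (i + 1) j h l i (by omega)).symm
  have hGcube : G ∈ dyadicCube d k m := by
    intro l j
    have h0 : G l (j : ℕ) = P 0 l (j : ℕ) := hG 0 l (j : ℕ) (by omega)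
    rw [h0]
    show basePoint m l (j : ℕ) = m l j
    unfold basePoint
    rw [dif_pos j.isLt]
  have hGnF : G ∉ F := fun h => Set.disjoint_left.mp hdisj (hsub hGcube) h
  -- convergence along the subsequence 2^(k+j)
  have htendN : Tendsto (fun j : ℕ => (2 : ℕ) ^ (k + j)) atTop atTop := by
    apply tendsto_atTop_mono (f := fun j : ℕ => j)
    · intro j
      calc j ≤ k + j := Nat.le_add_left j k
        _ ≤ 2 ^ (k + j) := le_of_lt Nat.lt_two_pow_self
    · exact tendsto_id
  have htend : Tendsto (fun j => cubicSum c (2 ^ (k + j)) G) atTop (nhds 0) :=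
    (hconv G hGnF).comp htendN
  have heq : ∀ j, cubicSum c (2 ^ (k + j)) G = cubicSum c (2 ^ (k + j)) (P j) := by
    intro j
    exact cubicSum_congr c (fun l i hi => hG j l i hi)
  have htendP : Tendsto (fun j => ‖cubicSum c (2 ^ (k + j)) (P j)‖) atTop (nhds 0) := by
    have := htend.norm
    simp only [norm_zero] at this
    refine this.congr fun j => ?_
    rw [heq j]
  have hle : ‖cubicSum c (2 ^ k) (P 0)‖ ≤ 0 :=
    ge_of_tendsto' htendP hval
  have hzero : cubicSum c (2 ^ k) (basePoint m) = 0 := by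
    have : ‖cubicSum c (2 ^ k) (basePoint m)‖ = 0 :=
      le_antisymm (by exact hle) (norm_nonneg _)
    exact norm_eq_zero.mp this
  unfold generatedQM
  rw [hzero, mul_zero]
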